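/- Let f be a probability density on (0,∞) such that f(x) ~ C x^η e^{-ζ x} as x → ∞ for constants C > 0, ζ ≥ 0, and η ∈ ℝ (with η < -1 when ζ = 0). Fix λ > 0 and define the mixed Poisson probabilities π_k = ∫₀^∞ ((λx)^k e^{-λx} / k!) f(x) dx. Then π_k ~ (C/(λ+ζ)^{η+1}) (λ/(λ+ζ))^k k^η as k → ∞. -/

import Mathlib

open Filter Topology MeasureTheory Real

lemma aux_nat_div_tendsto (a b : ℝ) :
    Tendsto (fun n : ℕ => ((n : ℝ) + a) / ((n : ℝ) + b)) atTop (𝓝 1) := by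
  have h0 : Tendsto (fun n : ℕ => (n : ℝ) + b) atTop atTop :=
    tendsto_atTop_add_const_right _ b tendsto_natCast_atTop_atTop
  have h1 : Tendsto (fun n : ℕ => (a - b) / ((n : ℝ) + b)) atTop (𝓝 0) :=
    Tendsto.div_atTop tendsto_const_nhds h0
  have h2 : Tendsto (fun n : ℕ => 1 + (a - b) / ((n : ℝ) + b)) atTop (𝓝 1) := by
    simpa using tendsto_const_nhds.add h1
  refine h2.congr' ?_
  filter_upwards [h0.eventually_gt_atTop 0] with n hn
  field_simp
  ring
  -- done by field_simp

lemma wendel_upper {x θ : ℝ} (hx : 0 < x) (hθ : 0 < θ) (hθ1 : θ < 1) :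
    Real.Gamma (x + θ) ≤ Real.Gamma x * x ^ θ := by
  have h := Real.Gamma_mul_add_mul_le_rpow_Gamma_mul_rpow_Gamma hx
    (by linarith : (0:ℝ) < x + 1) (by linarith : (0:ℝ) < 1 - θ) hθ (by ring)
  have hxθ : (1 - θ) * x + θ * (x + 1) = x + θ := by ring
  rw [hxθ] at h
  have hΓ : 0 < Real.Gamma x := Real.Gamma_pos_of_pos hx
  calc Real.Gamma (x + θ) ≤ Real.Gamma x ^ (1 - θ) * Real.Gamma (x + 1) ^ θ := h
    _ = Real.Gamma x * x ^ θ := by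
        rw [Real.Gamma_add_one (ne_of_gt hx), Real.mul_rpow hx.le hΓ.le, ← mul_assoc,
          mul_comm (Real.Gamma x ^ (1 - θ)) (x ^ θ), mul_assoc, ← Real.rpow_add hΓ]
        rw [sub_add_cancel, Real.rpow_one]
        ring

lemma wendel_lower {x θ : ℝ} (hx : 0 < x) (hθ : 0 < θ) (hθ1 : θ < 1) :
    x * Real.Gamma x ≤ Real.Gamma (x + θ) * (x + θ) ^ (1 - θ) := by
  have hxθ : 0 < x + θ := by linarith
  have h := Real.Gamma_mul_add_mul_le_rpow_Gamma_mul_rpow_Gamma hxθ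
    (by linarith : (0:ℝ) < x + 1 + θ) hθ (by linarith : (0:ℝ) < 1 - θ) (by ring)
  have hc : θ * (x + θ) + (1 - θ) * (x + 1 + θ) = x + 1 := by ring
  rw [hc] at h
  have h2 : x + 1 + θ = (x + θ) + 1 := by ring
  rw [h2, Real.Gamma_add_one (ne_of_gt hxθ)] at h
  have hΓ : 0 < Real.Gamma (x + θ) := Real.Gamma_pos_of_pos hxθ
  calc x * Real.Gamma x = Real.Gamma (x + 1) := (Real.Gamma_add_one (ne_of_gt hx)).symm
    _ ≤ Real.Gamma (x + θ) ^ θ * ((x + θ) * Real.Gamma (x + θ)) ^ (1 - θ) := h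
    _ = Real.Gamma (x + θ) * (x + θ) ^ (1 - θ) := by
        rw [Real.mul_rpow hxθ.le hΓ.le, ← mul_assoc,
          mul_comm (Real.Gamma (x+θ) ^ θ) ((x+θ) ^ (1-θ)), mul_assoc, ← Real.rpow_add hΓ]
        rw [add_sub_cancel, Real.rpow_one]
        ring

noncomputable def grSeq (a : ℝ) (n : ℕ) : ℝ :=
  Real.Gamma ((n : ℝ) + 1 + a) / ((n.factorial : ℝ) * (n : ℝ) ^ a)

lemma gr_base {θ : ℝ} (h0 : 0 < θ) (h1 : θ < 1) : Tendsto (grSeq θ) atTop (𝓝 1) := by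
  have hU : Tendsto (fun n : ℕ => (((n:ℝ)+1)/((n:ℝ)+0)) ^ θ) atTop (𝓝 1) := by
    simpa using (aux_nat_div_tendsto 1 0).rpow_const (Or.inl one_ne_zero)
  have hL : Tendsto (fun n : ℕ =>
      (((n:ℝ)+1)/((n:ℝ)+(1+θ))) ^ (1-θ) * (((n:ℝ)+1)/((n:ℝ)+0)) ^ θ) atTop (𝓝 1) := by
    have h2 := (aux_nat_div_tendsto 1 (1+θ)).rpow_const (p := 1-θ) (Or.inl one_ne_zero)
    simpa using h2.mul hU
  refine tendsto_of_tendsto_of_tendsto_of_le_of_le' hL hU ?_ ?_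
  · filter_upwards [eventually_ge_atTop 1] with n hn
    have npos : (0:ℝ) < n := by exact_mod_cast hn
    have hx : (0:ℝ) < (n:ℝ) + 1 := by linarith
    have hw := wendel_lower hx h0 h1
    rw [Real.Gamma_nat_eq_factorial] at hw
    have hfpos : (0:ℝ) < (n.factorial : ℝ) := by exact_mod_cast n.factorial_pos
    have hnθ : (0:ℝ) < (n:ℝ) ^ θ := Real.rpow_pos_of_pos npos _
    have hd : (0:ℝ) < ((n:ℝ)+1+θ) ^ (1-θ) := Real.rpow_pos_of_pos (by linarith) _
    have hΓ : (0:ℝ) ≤ Real.Gamma ((n:ℝ)+1+θ) :=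
      (Real.Gamma_pos_of_pos (by linarith)).le
    -- L n = ((n+1)/(n+1+θ))^(1-θ) * ((n+1)/n)^θ
    have hLeq : (((n:ℝ)+1)/((n:ℝ)+(1+θ))) ^ (1-θ) * (((n:ℝ)+1)/((n:ℝ)+0)) ^ θ
        = ((n:ℝ)+1) / (((n:ℝ)+1+θ) ^ (1-θ) * (n:ℝ) ^ θ) := by
      rw [add_zero, Real.div_rpow (by linarith) (by linarith),
        Real.div_rpow (by linarith) npos.le, div_mul_div_comm,
        ← Real.rpow_add (by linarith : (0:ℝ) < (n:ℝ)+1), sub_add_cancel, Real.rpow_one]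
      have : (n:ℝ)+(1+θ) = (n:ℝ)+1+θ := by ring
      rw [this]
    rw [hLeq, grSeq, div_le_div_iff₀ (by positivity) (by positivity)]
    calc ((n:ℝ)+1) * ((n.factorial:ℝ) * (n:ℝ) ^ θ)
        = (((n:ℝ)+1) * (n.factorial:ℝ)) * (n:ℝ) ^ θ := by ring
      _ ≤ (Real.Gamma ((n:ℝ)+1+θ) * ((n:ℝ)+1+θ) ^ (1-θ)) * (n:ℝ) ^ θ := by
          exact mul_le_mul_of_nonneg_right hw hnθ.le
      _ = Real.Gamma ((n:ℝ)+1+θ) * (((n:ℝ)+1+θ) ^ (1-θ) * (n:ℝ) ^ θ) := by ring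
  · filter_upwards [eventually_ge_atTop 1] with n hn
    have npos : (0:ℝ) < n := by exact_mod_cast hn
    have hx : (0:ℝ) < (n:ℝ) + 1 := by linarith
    have hw := wendel_upper hx h0 h1
    rw [Real.Gamma_nat_eq_factorial] at hw
    have hfpos : (0:ℝ) < (n.factorial : ℝ) := by exact_mod_cast n.factorial_pos
    have hnθ : (0:ℝ) < (n:ℝ) ^ θ := Real.rpow_pos_of_pos npos _
    rw [grSeq, div_le_iff₀ (by positivity)]
    calc Real.Gamma ((n:ℝ)+1+θ) ≤ (n.factorial:ℝ) * ((n:ℝ)+1) ^ θ := hw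
      _ = (((n:ℝ)+1)/((n:ℝ)+0)) ^ θ * ((n.factorial:ℝ) * (n:ℝ) ^ θ) := by
          rw [add_zero, Real.div_rpow (by linarith) npos.le]
          field_simp

lemma gr_succ {a : ℝ} (h : Tendsto (grSeq a) atTop (𝓝 1)) :
    Tendsto (grSeq (a + 1)) atTop (𝓝 1) := by
  have haux : Tendsto (fun n : ℕ => ((n:ℝ)+(1+a))/((n:ℝ)+0)) atTop (𝓝 1) :=
    aux_nat_div_tendsto (1+a) 0
  have hmul := haux.mul h
  rw [one_mul] at hmul
  refine hmul.congr' ?_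
  have hev : ∀ᶠ n : ℕ in atTop, 0 < (n:ℝ) + 1 + a := by
    have := (tendsto_atTop_add_const_right atTop (1+a) tendsto_natCast_atTop_atTop
      : Tendsto (fun n : ℕ => (n:ℝ)+(1+a)) atTop atTop).eventually_gt_atTop 0
    filter_upwards [this] with n hn; linarith
  filter_upwards [hev, eventually_ge_atTop 1] with n hpos hn
  have npos : (0:ℝ) < n := by exact_mod_cast hn
  have hfpos : (0:ℝ) < (n.factorial : ℝ) := by exact_mod_cast n.factorial_pos
  have hna : ((n:ℝ)) ^ a ≠ 0 := (Real.rpow_pos_of_pos npos _).ne'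
  have hΓ : Real.Gamma ((n:ℝ)+1+(a+1)) = ((n:ℝ)+1+a) * Real.Gamma ((n:ℝ)+1+a) := by
    have e : (n:ℝ)+1+(a+1) = ((n:ℝ)+1+a)+1 := by ring
    rw [e, Real.Gamma_add_one hpos.ne']
  simp only [grSeq, hΓ, Real.rpow_add_one npos.ne' a, add_zero]
  field_simp
  ring

lemma gr_pred {a : ℝ} (h : Tendsto (grSeq a) atTop (𝓝 1)) :
    Tendsto (grSeq (a - 1)) atTop (𝓝 1) := by
  have haux : Tendsto (fun n : ℕ => ((n:ℝ)+0)/((n:ℝ)+a)) atTop (𝓝 1) :=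
    aux_nat_div_tendsto 0 a
  have hmul := haux.mul h
  rw [one_mul] at hmul
  refine hmul.congr' ?_
  have hev : ∀ᶠ n : ℕ in atTop, 0 < (n:ℝ) + a := by
    exact (tendsto_atTop_add_const_right atTop a tendsto_natCast_atTop_atTop
      : Tendsto (fun n : ℕ => (n:ℝ)+a) atTop atTop).eventually_gt_atTop 0
  filter_upwards [hev, eventually_ge_atTop 1] with n hpos hn
  have npos : (0:ℝ) < n := by exact_mod_cast hn
  have hfpos : (0:ℝ) < (n.factorial : ℝ) := by exact_mod_cast n.factorial_pos
  have hna : ((n:ℝ)) ^ a ≠ 0 := (Real.rpow_pos_of_pos npos _).ne'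
  have hΓ : Real.Gamma ((n:ℝ)+1+a) = ((n:ℝ)+a) * Real.Gamma ((n:ℝ)+a) := by
    have e : (n:ℝ)+1+a = ((n:ℝ)+a)+1 := by ring
    rw [e, Real.Gamma_add_one hpos.ne']
  have hrp : ((n:ℝ)) ^ (a-1) = (n:ℝ) ^ a / (n:ℝ) := by
    rw [Real.rpow_sub npos, Real.rpow_one]
  have e2 : (n:ℝ)+1+(a-1) = (n:ℝ)+a := by ring
  simp only [grSeq, e2, hrp, add_zero]
  rw [hΓ]
  field_simp

lemma gammaRatio (a : ℝ) : Tendsto (grSeq a) atTop (𝓝 1) := by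
  have base : Tendsto (grSeq (Int.fract a)) atTop (𝓝 1) := by
    rcases eq_or_lt_of_le (Int.fract_nonneg a) with h0 | h0
    · rw [← h0]
      refine Tendsto.congr (fun n => ?_) tendsto_const_nhds
      have hfpos : ((n.factorial : ℝ)) ≠ 0 := by
        exact_mod_cast n.factorial_pos.ne'
      simp [grSeq, Real.Gamma_nat_eq_factorial, hfpos]
    · exact gr_base h0 (Int.fract_lt_one a)
  have key : ∀ m : ℤ, Tendsto (grSeq (Int.fract a + m)) atTop (𝓝 1) := by
    intro m
    induction m using Int.induction_on with
    | zero => simpa using base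
    | succ i ih =>
        have := gr_succ ih
        have e : Int.fract a + ((i:ℤ):ℝ) + 1 = Int.fract a + (((i:ℤ)+1 : ℤ) : ℝ) := by push_cast; ring
        rwa [e] at this
    | pred i ih =>
        have := gr_pred ih
        have e : Int.fract a + ((-(i:ℤ) : ℤ):ℝ) - 1 = Int.fract a + (((-(i:ℤ)-1 : ℤ)) : ℝ) := by push_cast; ring
        rwa [e] at this
  have := key ⌊a⌋
  rwa [add_comm, Int.floor_add_fract] at this

lemma kernel_g_eq {lam ζ C η : ℝ} (k : ℕ) {x : ℝ} (hx : 0 < x) :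
    (lam*x)^k * Real.exp (-(lam*x)) / (k.factorial : ℝ) * (C * x^η * Real.exp (-ζ*x))
    = (C * lam^k / (k.factorial:ℝ)) * (x ^ ((k:ℝ)+η) * Real.exp (-((lam+ζ)*x))) := by
  rw [Real.rpow_add hx, Real.rpow_natCast, mul_pow,
    show -((lam+ζ)*x) = -(lam*x) + -ζ*x by ring, Real.exp_add]
  ring

lemma integrableOn_kernel_g {lam ζ C η : ℝ} (hp : 0 < lam + ζ) (k : ℕ)
    (hk : -1 < (k:ℝ) + η) :
    IntegrableOn (fun x => (lam*x)^k * Real.exp (-(lam*x)) / (k.factorial:ℝ)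
      * (C * x^η * Real.exp (-ζ*x))) (Set.Ioi 0) := by
  have h1 : IntegrableOn (fun x : ℝ => x ^ ((k:ℝ)+η) * Real.exp (-((lam+ζ) * x)))
      (Set.Ioi 0) := by
    have h2 := integrableOn_rpow_mul_exp_neg_mul_rpow hk (p := 1) one_pos hp
    refine h2.congr_fun (fun x hx => ?_) measurableSet_Ioi
    simp only [Real.rpow_one, neg_mul]
  have h3 : IntegrableOn (fun x : ℝ => (C * lam^k / (k.factorial:ℝ))
      * (x ^ ((k:ℝ)+η) * Real.exp (-((lam+ζ) * x)))) (Set.Ioi 0) :=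
    h1.const_mul _
  exact h3.congr_fun (fun x hx => (kernel_g_eq k hx).symm) measurableSet_Ioi

lemma integral_kernel_g {lam ζ C η : ℝ} (hp : 0 < lam + ζ) (k : ℕ)
    (hk : -1 < (k:ℝ) + η) :
    ∫ x in Set.Ioi (0:ℝ), (lam*x)^k * Real.exp (-(lam*x)) / (k.factorial:ℝ)
      * (C * x^η * Real.exp (-ζ*x))
    = C * lam^k / (k.factorial:ℝ)
      * ((1/(lam+ζ)) ^ ((k:ℝ)+η+1) * Real.Gamma ((k:ℝ)+η+1)) := by
  rw [setIntegral_congr_fun measurableSet_Ioi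
    (fun x (hx : x ∈ Set.Ioi (0:ℝ)) => kernel_g_eq k hx), MeasureTheory.integral_const_mul]
  congr 1
  have he : ∀ x ∈ Set.Ioi (0:ℝ),
      x ^ ((k:ℝ)+η) * Real.exp (-((lam+ζ)*x))
      = x ^ (((k:ℝ)+η+1) - 1) * Real.exp (-((lam+ζ)*x)) := by
    intro x hx
    norm_num
  rw [setIntegral_congr_fun measurableSet_Ioi he,
    Real.integral_rpow_mul_exp_neg_mul_Ioi (by linarith) hp]

lemma TD_tendsto {C ζ η lam : ℝ} (hC : 0 < C) (hζ : 0 ≤ ζ) (hlam : 0 < lam) :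
    Tendsto (fun k : ℕ =>
      (C * lam^k / (k.factorial:ℝ) * ((1/(lam+ζ)) ^ ((k:ℝ)+η+1) * Real.Gamma ((k:ℝ)+η+1)))
      / (C / (lam + ζ) ^ (η + 1) * (lam / (lam + ζ)) ^ k * (k : ℝ) ^ η)) atTop (𝓝 1) := by
  have hp : 0 < lam + ζ := by linarith
  refine (gammaRatio η).congr' ?_
  filter_upwards [eventually_ge_atTop 1] with k hk
  have kpos : (0:ℝ) < k := by exact_mod_cast hk
  have hfpos : (0:ℝ) < (k.factorial : ℝ) := by exact_mod_cast k.factorial_pos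
  have hkη : (0:ℝ) < (k:ℝ) ^ η := Real.rpow_pos_of_pos kpos _
  have hpη : (0:ℝ) < (lam+ζ) ^ (η+1) := Real.rpow_pos_of_pos hp _
  have hpk : (0:ℝ) < (lam+ζ) ^ k := pow_pos hp _
  have hlk : (0:ℝ) < lam ^ k := pow_pos hlam _
  have e1 : (1/(lam+ζ)) ^ ((k:ℝ)+η+1)
      = (1/((lam+ζ)^k)) * ((lam+ζ) ^ (η+1))⁻¹ := by
    rw [show (k:ℝ)+η+1 = (k:ℝ)+(η+1) by ring, Real.rpow_add (by positivity),
      Real.rpow_natCast, div_pow, one_pow]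
    congr 1
    rw [one_div, Real.inv_rpow hp.le]
  have e3 : (k:ℝ)+η+1 = (k:ℝ)+1+η := by ring
  rw [grSeq, e1, e3, div_pow]
  field_simp

lemma A_tendsto {C ζ η lam M : ℝ} (hC : 0 < C) (hζ : 0 ≤ ζ) (hlam : 0 < lam) (hM : 0 < M) :
    Tendsto (fun k : ℕ => ((lam*M)^k / (k.factorial:ℝ))
      / (C / (lam + ζ) ^ (η + 1) * (lam / (lam + ζ)) ^ k * (k : ℝ) ^ η)) atTop (𝓝 0) := by
  have hp : 0 < lam + ζ := by linarith
  have hq : 0 < (lam+ζ)*M := by positivity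
  obtain ⟨m, hm⟩ := exists_nat_ge (-η)
  have key : Tendsto (fun k : ℕ =>
      (((lam+ζ)*M)^k/(k.factorial:ℝ)) * ((k:ℝ) ^ (-η))) atTop (𝓝 0) := by
    have hv : Tendsto (fun k : ℕ =>
        ((2*((lam+ζ)*M))^k/(k.factorial:ℝ)) * ((k:ℝ)^m/2^k)) atTop (𝓝 0) := by
      have := (FloorSemiring.tendsto_pow_div_factorial_atTop (2*((lam+ζ)*M))).mul
        (tendsto_pow_const_div_const_pow_of_one_lt m one_lt_two)
      simpa using this
    refine squeeze_zero' ?_ ?_ hv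
    · filter_upwards [eventually_ge_atTop 1] with k hk
      have kpos : (0:ℝ) < k := by exact_mod_cast hk
      positivity
    · filter_upwards [eventually_ge_atTop 1] with k hk
      have k1 : (1:ℝ) ≤ k := by exact_mod_cast hk
      have hfpos : (0:ℝ) < (k.factorial : ℝ) := by exact_mod_cast k.factorial_pos
      have h1 : ((k:ℝ)) ^ (-η) ≤ ((k:ℝ)) ^ (m:ℝ) :=
        Real.rpow_le_rpow_of_exponent_le k1 hm
      have h2 : ((k:ℝ)) ^ ((m:ℕ):ℝ) = (k:ℝ) ^ (m:ℕ) := Real.rpow_natCast _ _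
      calc (((lam+ζ)*M)^k/(k.factorial:ℝ)) * ((k:ℝ) ^ (-η))
          ≤ (((lam+ζ)*M)^k/(k.factorial:ℝ)) * ((k:ℝ) ^ (m:ℕ)) := by
            refine mul_le_mul_of_nonneg_left ?_ (by positivity)
            rw [← h2]; exact h1
        _ = ((2*((lam+ζ)*M))^k/(k.factorial:ℝ)) * ((k:ℝ)^m/2^k) := by
            simp only [mul_pow]
            field_simp
  have keyc := key.const_mul ((lam+ζ)^(η+1)/C)
  rw [mul_zero] at keyc
  refine keyc.congr' ?_
  filter_upwards [eventually_ge_atTop 1] with k hk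
  have kpos : (0:ℝ) < k := by exact_mod_cast hk
  have hfpos : (0:ℝ) < (k.factorial : ℝ) := by exact_mod_cast k.factorial_pos
  have hkη : (0:ℝ) < (k:ℝ) ^ η := Real.rpow_pos_of_pos kpos _
  have hpη : (0:ℝ) < (lam+ζ) ^ (η+1) := Real.rpow_pos_of_pos hp _
  have hpk : (0:ℝ) < (lam+ζ) ^ k := pow_pos hp _
  have hlk : (0:ℝ) < lam ^ k := pow_pos hlam _
  rw [Real.rpow_neg kpos.le, mul_pow, mul_pow, div_pow]
  field_simp

/-- Willmot's theorem (constant slowly varying function case): asymptotics of mixed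
Poisson probabilities when the mixing density satisfies f(x) ~ C x^η e^{-ζx}. -/
theorem mixed_poisson_asymptotics
    (f : ℝ → ℝ) (C ζ η lam : ℝ)
    (hC : 0 < C) (hζ : 0 ≤ ζ) (hη : ζ = 0 → η < -1) (hlam : 0 < lam)
    (hf_nonneg : ∀ x : ℝ, 0 ≤ f x)
    (hf_dens : ∫ x in Set.Ioi (0 : ℝ), f x = 1)
    (hf_asymp : Tendsto (fun x : ℝ => f x / (C * x ^ η * Real.exp (-ζ * x)))
      atTop (𝓝 1)) :
    Tendsto (fun k : ℕ =>
      (∫ x in Set.Ioi (0 : ℝ),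
          (lam * x) ^ k * Real.exp (-(lam * x)) / (Nat.factorial k) * f x) /
        (C / (lam + ζ) ^ (η + 1) * (lam / (lam + ζ)) ^ k * (k : ℝ) ^ η))
      atTop (𝓝 1) := by
  have hp : 0 < lam + ζ := by linarith
  set g : ℝ → ℝ := fun x => C * x ^ η * Real.exp (-ζ * x) with hg
  set K : ℕ → ℝ → ℝ :=
    fun k x => (lam * x) ^ k * Real.exp (-(lam * x)) / (Nat.factorial k : ℝ) with hK
  set D : ℕ → ℝ :=
    fun k => C / (lam + ζ) ^ (η + 1) * (lam / (lam + ζ)) ^ k * (k : ℝ) ^ η with hD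
  set S : ℕ → ℝ := fun k => ∫ x in Set.Ioi (0:ℝ), K k x * f x with hS
  set T : ℕ → ℝ := fun k => ∫ x in Set.Ioi (0:ℝ), K k x * g x with hT
  -- basic pointwise facts
  have hK_nonneg : ∀ (k : ℕ) (x : ℝ), 0 ≤ x → 0 ≤ K k x := by
    intro k x hx
    simp only [hK]
    have h0 : (0:ℝ) ≤ lam * x := mul_nonneg hlam.le hx
    exact div_nonneg (mul_nonneg (pow_nonneg h0 _) (Real.exp_pos _).le) (by positivity)
  have hK_le_one : ∀ (k : ℕ) (x : ℝ), 0 ≤ x → K k x ≤ 1 := by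
    intro k x hx
    simp only [hK]
    have h0 : (0:ℝ) ≤ lam * x := mul_nonneg hlam.le hx
    have h1 : (lam*x)^k/(Nat.factorial k : ℝ) ≤ Real.exp (lam*x) :=
      Real.pow_div_factorial_le_exp (x := lam*x) h0 k
    calc (lam*x)^k * Real.exp (-(lam*x))/(Nat.factorial k : ℝ)
        = ((lam*x)^k/(Nat.factorial k : ℝ)) * Real.exp (-(lam*x)) := by ring
      _ ≤ Real.exp (lam*x) * Real.exp (-(lam*x)) :=
          mul_le_mul_of_nonneg_right h1 (Real.exp_pos _).le
      _ = 1 := by rw [← Real.exp_add]; simp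
  have hg_nonneg : ∀ x : ℝ, 0 < x → 0 ≤ g x := by
    intro x hx
    simp only [hg]
    have := Real.rpow_pos_of_pos hx η
    positivity
  have hf_int : IntegrableOn f (Set.Ioi 0) volume := by
    by_contra h
    rw [MeasureTheory.integral_undef h] at hf_dens
    norm_num at hf_dens
  have hKf_int : ∀ k : ℕ, IntegrableOn (fun x => K k x * f x) (Set.Ioi 0) volume := by
    intro k
    have hcont : Continuous (K k) := by
      simp only [hK]; fun_prop
    refine Integrable.mono' hf_int
      (hcont.aestronglyMeasurable.mul hf_int.aestronglyMeasurable) ?_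
    rw [ae_restrict_iff' measurableSet_Ioi]
    refine Filter.Eventually.of_forall (fun x hx => ?_)
    have hx0 : (0:ℝ) < x := hx
    rw [Real.norm_eq_abs, abs_of_nonneg (mul_nonneg (hK_nonneg k x hx0.le) (hf_nonneg x))]
    calc K k x * f x ≤ 1 * f x :=
          mul_le_mul_of_nonneg_right (hK_le_one k x hx0.le) (hf_nonneg x)
      _ = f x := one_mul _
  have hKg_int : ∀ k : ℕ, -1 < (k:ℝ) + η →
      IntegrableOn (fun x => K k x * g x) (Set.Ioi 0) volume := by
    intro k hk
    exact integrableOn_kernel_g hp k hk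
  have hev_kη : ∀ᶠ k : ℕ in atTop, -1 < (k:ℝ) + η := by
    have h := tendsto_atTop_add_const_right atTop η
      (tendsto_natCast_atTop_atTop : Tendsto (fun k : ℕ => (k:ℝ)) atTop atTop)
    exact h.eventually_gt_atTop (-1)
  have hev_kη0 : ∀ᶠ k : ℕ in atTop, 0 ≤ (k:ℝ) + η := by
    have h := tendsto_atTop_add_const_right atTop η
      (tendsto_natCast_atTop_atTop : Tendsto (fun k : ℕ => (k:ℝ)) atTop atTop)
    filter_upwards [h.eventually_gt_atTop 0] with k hk using hk.le
  have hT_val : ∀ᶠ k : ℕ in atTop, T k = C * lam^k / (k.factorial:ℝ)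
      * ((1/(lam+ζ)) ^ ((k:ℝ)+η+1) * Real.Gamma ((k:ℝ)+η+1)) := by
    filter_upwards [hev_kη] with k hk
    rw [hT]
    simp only [hK, hg]
    exact integral_kernel_g hp k hk
  have hD_pos : ∀ᶠ k : ℕ in atTop, 0 < D k := by
    filter_upwards [eventually_ge_atTop 1] with k hk
    have kpos : (0:ℝ) < k := by exact_mod_cast hk
    rw [hD]
    exact mul_pos (mul_pos (div_pos hC (Real.rpow_pos_of_pos hp _))
      (pow_pos (div_pos hlam hp) _)) (Real.rpow_pos_of_pos kpos _)
  have hT_nonneg : ∀ k : ℕ, 0 ≤ T k := by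
    intro k
    rw [hT]
    refine setIntegral_nonneg measurableSet_Ioi (fun x hx => ?_)
    exact mul_nonneg (hK_nonneg k x (le_of_lt hx)) (hg_nonneg x hx)
  have hTD : Tendsto (fun k => T k / D k) atTop (𝓝 1) := by
    refine (TD_tendsto (η := η) hC hζ hlam).congr' ?_
    filter_upwards [hT_val] with k hk
    rw [hk, hD]
  have hST : Tendsto (fun k => (S k - T k) / D k) atTop (𝓝 0) := by
    rw [Metric.tendsto_atTop]
    intro ε hε
    have hε4 : 0 < ε/4 := by linarith
    have h1 := Metric.tendsto_nhds.mp hf_asymp (ε/4) hε4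
    rw [eventually_atTop] at h1
    obtain ⟨M₀, hM₀⟩ := h1
    set M := max M₀ 1 with hM
    have hM1 : (1:ℝ) ≤ M := le_max_right _ _
    have hM0 : (0:ℝ) < M := lt_of_lt_of_le one_pos hM1
    have hfg : ∀ x, M ≤ x → |f x - g x| ≤ ε/4 * g x := by
      intro x hx
      have hx0 : 0 < x := lt_of_lt_of_le hM0 hx
      have hgpos : 0 < g x := by
        simp only [hg]
        have := Real.rpow_pos_of_pos hx0 η
        positivity
      have h2 := hM₀ x (le_trans (le_max_left _ _) hx)
      rw [Real.dist_eq] at h2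
      have h3 : |f x / g x - 1| ≤ ε/4 := h2.le
      have h4 : |f x - g x| = |f x / g x - 1| * g x := by
        rw [show f x - g x = (f x / g x - 1) * g x by field_simp, abs_mul,
          abs_of_pos hgpos]
      rw [h4]
      exact mul_le_mul_of_nonneg_right h3 hgpos.le
    have hMη : (0:ℝ) < M ^ (η+1) := Real.rpow_pos_of_pos hM0 _
    have hc₁ : (0:ℝ) < 1 + C * M^(η+1) := by positivity
    have hkey : ∀ᶠ k : ℕ in atTop, |S k - T k| ≤
        (1 + C * M^(η+1)) * ((lam*M)^k/(k.factorial:ℝ)) + ε/4 * T k := by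
      filter_upwards [hev_kη, hev_kη0] with k hkη hkη0
      have hKf := hKf_int k
      have hKg := hKg_int k hkη
      have hfl : (0:ℝ) < (Nat.factorial k : ℝ) := by exact_mod_cast k.factorial_pos
      have hsub : S k - T k = ∫ x in Set.Ioi (0:ℝ), (K k x * f x - K k x * g x) := by
        rw [hS, hT]
        exact (integral_sub hKf hKg).symm
      have hFint : IntegrableOn (fun x => K k x * f x - K k x * g x)
          (Set.Ioi 0) volume := hKf.sub hKg
      have hsplit : ∫ x in Set.Ioi (0:ℝ), (K k x * f x - K k x * g x)
          = (∫ x in Set.Ioc (0:ℝ) M, (K k x * f x - K k x * g x))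
            + ∫ x in Set.Ioi M, (K k x * f x - K k x * g x) := by
        rw [← Set.Ioc_union_Ioi_eq_Ioi hM0.le]
        exact setIntegral_union (Set.Ioc_disjoint_Ioi le_rfl) measurableSet_Ioi
          (hFint.mono_set Set.Ioc_subset_Ioi_self)
          (hFint.mono_set (Set.Ioi_subset_Ioi hM0.le))
      -- bound on (0, M] for f
      have hI1f : ∫ x in Set.Ioc (0:ℝ) M, K k x * f x ≤ (lam*M)^k/(k.factorial:ℝ) := by
        have hcM : (0:ℝ) ≤ (lam*M)^k/(k.factorial:ℝ) := by
          have : (0:ℝ) ≤ lam*M := by positivity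
          positivity
        have step1 : ∫ x in Set.Ioc (0:ℝ) M, K k x * f x
            ≤ ∫ x in Set.Ioc (0:ℝ) M, ((lam*M)^k/(k.factorial:ℝ)) * f x := by
          refine setIntegral_mono_on (hKf.mono_set Set.Ioc_subset_Ioi_self)
            ((hf_int.mono_set Set.Ioc_subset_Ioi_self).const_mul _)
            measurableSet_Ioc (fun x hx => ?_)
          refine mul_le_mul_of_nonneg_right ?_ (hf_nonneg x)
          simp only [hK]
          have h0 : (0:ℝ) ≤ lam * x := mul_nonneg hlam.le hx.1.le
          have hpow : (lam*x)^k ≤ (lam*M)^k :=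
            pow_le_pow_left₀ h0 (mul_le_mul_of_nonneg_left hx.2 hlam.le) k
          have hexp : Real.exp (-(lam*x)) ≤ 1 := by
            have h2 := Real.exp_le_exp.mpr (show -(lam*x) ≤ 0 by linarith)
            simpa using h2
          have h5 : (lam*x)^k * Real.exp (-(lam*x)) ≤ (lam*M)^k := by
            nlinarith [pow_nonneg h0 k, mul_nonneg (pow_nonneg h0 k)
              (by linarith : (0:ℝ) ≤ 1 - Real.exp (-(lam*x)))]
          simp only [div_eq_mul_inv]
          exact mul_le_mul_of_nonneg_right h5 (by positivity)
        have step3 : ∫ x in Set.Ioc (0:ℝ) M, f x ≤ 1 := by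
          rw [← hf_dens]
          exact setIntegral_mono_set hf_int
            (Filter.Eventually.of_forall (fun x => hf_nonneg x))
            (Set.Ioc_subset_Ioi_self.eventuallyLE)
        calc ∫ x in Set.Ioc (0:ℝ) M, K k x * f x
            ≤ ((lam*M)^k/(k.factorial:ℝ)) * ∫ x in Set.Ioc (0:ℝ) M, f x :=
              step1.trans_eq (MeasureTheory.integral_const_mul _ _)
          _ ≤ ((lam*M)^k/(k.factorial:ℝ)) * 1 := mul_le_mul_of_nonneg_left step3 hcM
          _ = (lam*M)^k/(k.factorial:ℝ) := mul_one _
      -- bound on (0, M] for g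
      have hI1g : ∫ x in Set.Ioc (0:ℝ) M, K k x * g x
          ≤ C * M^(η+1) * ((lam*M)^k/(k.factorial:ℝ)) := by
        have step1 : ∫ x in Set.Ioc (0:ℝ) M, K k x * g x
            ≤ ∫ _x in Set.Ioc (0:ℝ) M, (C * lam^k * M^((k:ℝ)+η)/(k.factorial:ℝ)) := by
          refine setIntegral_mono_on (hKg.mono_set Set.Ioc_subset_Ioi_self)
            (integrableOn_const measure_Ioc_lt_top.ne)
            measurableSet_Ioc (fun x hx => ?_)
          have hx0 : (0:ℝ) < x := hx.1
          have h0 : (0:ℝ) ≤ lam * x := mul_nonneg hlam.le hx0.le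
          have hexp1 : Real.exp (-(lam*x)) ≤ 1 := by
            have h2 := Real.exp_le_exp.mpr (show -(lam*x) ≤ 0 by linarith)
            simpa using h2
          have hexp2 : Real.exp (-ζ*x) ≤ 1 := by
            have hζx : (0:ℝ) ≤ ζ * x := mul_nonneg hζ hx0.le
            have h2 := Real.exp_le_exp.mpr (show -ζ*x ≤ 0 by nlinarith)
            simpa using h2
          have hxη : (0:ℝ) < x ^ η := Real.rpow_pos_of_pos hx0 _
          have hb2 : x^((k:ℝ)+η) ≤ M^((k:ℝ)+η) :=
            Real.rpow_le_rpow hx0.le hx.2 hkη0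
          simp only [hK, hg]
          have A1 : (lam*x)^k * Real.exp (-(lam*x))/(Nat.factorial k:ℝ)
              ≤ (lam*x)^k/(Nat.factorial k:ℝ) := by
            have h5 : (lam*x)^k * Real.exp (-(lam*x)) ≤ (lam*x)^k :=
              mul_le_of_le_one_right (pow_nonneg h0 k) hexp1
            simp only [div_eq_mul_inv]
            exact mul_le_mul_of_nonneg_right h5 (by positivity)
          have A2 : C * x^η * Real.exp (-ζ*x) ≤ C * x^η :=
            mul_le_of_le_one_right (by positivity) hexp2
          calc (lam*x)^k * Real.exp (-(lam*x))/(Nat.factorial k:ℝ)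
                * (C * x^η * Real.exp (-ζ*x))
              ≤ ((lam*x)^k/(Nat.factorial k:ℝ)) * (C * x^η) := by
                refine mul_le_mul A1 A2 ?_ ?_
                · positivity
                · positivity
            _ = C * lam^k * (x^(k:ℝ) * x^η)/(Nat.factorial k:ℝ) := by
                rw [mul_pow, Real.rpow_natCast]; ring
            _ = C * lam^k * x^((k:ℝ)+η)/(Nat.factorial k:ℝ) := by
                rw [Real.rpow_add hx0]
            _ ≤ C * lam^k * M^((k:ℝ)+η)/(Nat.factorial k:ℝ) := by
                have hmul : C * lam^k * x^((k:ℝ)+η) ≤ C * lam^k * M^((k:ℝ)+η) :=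
                  mul_le_mul_of_nonneg_left hb2 (by positivity)
                simp only [div_eq_mul_inv]
                exact mul_le_mul_of_nonneg_right hmul (by positivity)
        have step2 : ∫ _x in Set.Ioc (0:ℝ) M, (C * lam^k * M^((k:ℝ)+η)/(k.factorial:ℝ))
            = M * (C * lam^k * M^((k:ℝ)+η)/(k.factorial:ℝ)) := by
          rw [setIntegral_const, Real.volume_real_Ioc_of_le hM0.le, smul_eq_mul,
            sub_zero]
        have step3 : M * (C * lam^k * M^((k:ℝ)+η)/(k.factorial:ℝ))
            = C * M^(η+1) * ((lam*M)^k/(k.factorial:ℝ)) := by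
          rw [Real.rpow_add hM0, Real.rpow_add hM0, Real.rpow_natCast, Real.rpow_one,
            mul_pow]
          ring
        calc ∫ x in Set.Ioc (0:ℝ) M, K k x * g x
            ≤ ∫ _x in Set.Ioc (0:ℝ) M, (C * lam^k * M^((k:ℝ)+η)/(k.factorial:ℝ)) := step1
          _ = C * M^(η+1) * ((lam*M)^k/(k.factorial:ℝ)) := step2.trans step3
      -- bound on (0, M]
      have hI1 : |∫ x in Set.Ioc (0:ℝ) M, (K k x * f x - K k x * g x)|
          ≤ (∫ x in Set.Ioc (0:ℝ) M, K k x * f x)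
            + ∫ x in Set.Ioc (0:ℝ) M, K k x * g x := by
        have hdom : IntegrableOn (fun x => K k x * f x + K k x * g x)
            (Set.Ioc (0:ℝ) M) volume :=
          (hKf.mono_set Set.Ioc_subset_Ioi_self).add (hKg.mono_set Set.Ioc_subset_Ioi_self)
        have hb : ‖∫ x in Set.Ioc (0:ℝ) M, (K k x * f x - K k x * g x)‖
            ≤ ∫ x in Set.Ioc (0:ℝ) M, (K k x * f x + K k x * g x) := by
          refine MeasureTheory.norm_integral_le_of_norm_le hdom ?_
          rw [ae_restrict_iff' measurableSet_Ioc]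
          refine Filter.Eventually.of_forall (fun x hx => ?_)
          have hx0 : (0:ℝ) < x := hx.1
          have n1 : 0 ≤ K k x * f x := mul_nonneg (hK_nonneg k x hx0.le) (hf_nonneg x)
          have n2 : 0 ≤ K k x * g x := mul_nonneg (hK_nonneg k x hx0.le) (hg_nonneg x hx0)
          rw [Real.norm_eq_abs]
          refine abs_le.mpr ⟨by linarith, by linarith⟩
        rw [Real.norm_eq_abs] at hb
        refine hb.trans_eq ?_
        exact MeasureTheory.integral_add (hKf.mono_set Set.Ioc_subset_Ioi_self)
          (hKg.mono_set Set.Ioc_subset_Ioi_self)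
      -- bound on (M, ∞)
      have hI2 : |∫ x in Set.Ioi M, (K k x * f x - K k x * g x)| ≤ ε/4 * T k := by
        have hdom : IntegrableOn (fun x => ε/4 * (K k x * g x)) (Set.Ioi M) volume :=
          (hKg.mono_set (Set.Ioi_subset_Ioi hM0.le)).const_mul _
        have hb : ‖∫ x in Set.Ioi M, (K k x * f x - K k x * g x)‖
            ≤ ∫ x in Set.Ioi M, ε/4 * (K k x * g x) := by
          refine MeasureTheory.norm_integral_le_of_norm_le hdom ?_
          rw [ae_restrict_iff' measurableSet_Ioi]
          refine Filter.Eventually.of_forall (fun x hx => ?_)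
          have hxM : M ≤ x := le_of_lt hx
          have hx0 : (0:ℝ) < x := lt_of_lt_of_le hM0 hxM
          rw [Real.norm_eq_abs, show K k x * f x - K k x * g x = K k x * (f x - g x) by ring,
            abs_mul, abs_of_nonneg (hK_nonneg k x hx0.le)]
          calc K k x * |f x - g x| ≤ K k x * (ε/4 * g x) :=
                mul_le_mul_of_nonneg_left (hfg x hxM) (hK_nonneg k x hx0.le)
            _ = ε/4 * (K k x * g x) := by ring
        rw [Real.norm_eq_abs] at hb
        refine hb.trans ?_
        rw [MeasureTheory.integral_const_mul]
        refine mul_le_mul_of_nonneg_left ?_ hε4.le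
        rw [hT]
        refine setIntegral_mono_set hKg ?_ ((Set.Ioi_subset_Ioi hM0.le).eventuallyLE)
        have hae : ∀ᵐ x ∂(volume.restrict (Set.Ioi (0:ℝ))), 0 ≤ K k x * g x :=
          (ae_restrict_iff' measurableSet_Ioi).mpr (Filter.Eventually.of_forall
            (fun x hx => mul_nonneg (hK_nonneg k x (le_of_lt hx)) (hg_nonneg x hx)))
        exact hae
      -- combine
      calc |S k - T k|
          = |(∫ x in Set.Ioc (0:ℝ) M, (K k x * f x - K k x * g x))
              + ∫ x in Set.Ioi M, (K k x * f x - K k x * g x)| := by rw [hsub, hsplit]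
        _ ≤ |∫ x in Set.Ioc (0:ℝ) M, (K k x * f x - K k x * g x)|
              + |∫ x in Set.Ioi M, (K k x * f x - K k x * g x)| := abs_add_le _ _
        _ ≤ ((∫ x in Set.Ioc (0:ℝ) M, K k x * f x)
              + ∫ x in Set.Ioc (0:ℝ) M, K k x * g x) + ε/4 * T k := add_le_add hI1 hI2
        _ ≤ ((lam*M)^k/(k.factorial:ℝ) + C * M^(η+1) * ((lam*M)^k/(k.factorial:ℝ)))
              + ε/4 * T k := by
            exact add_le_add (add_le_add hI1f hI1g) le_rfl
        _ = (1 + C * M^(η+1)) * ((lam*M)^k/(k.factorial:ℝ)) + ε/4 * T k := by ring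
    -- put the limits together
    have hA := A_tendsto (C := C) (ζ := ζ) (η := η) hC hζ hlam hM0
    have hA2 : Tendsto (fun k : ℕ =>
        (1 + C * M^(η+1)) * (((lam*M)^k/(k.factorial:ℝ))/D k)) atTop (𝓝 0) := by
      have h2 := hA.const_mul (1 + C * M^(η+1))
      rw [mul_zero] at h2
      refine h2.congr' ?_
      filter_upwards with k
      rw [hD]
    have ev2 := Metric.tendsto_nhds.mp hA2 (ε/4) hε4
    have ev3 : ∀ᶠ k : ℕ in atTop, T k / D k < 2 := hTD.eventually_lt_const one_lt_two
    have evAll := hkey.and (ev2.and (ev3.and hD_pos))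
    rw [eventually_atTop] at evAll
    obtain ⟨N, hN⟩ := evAll
    refine ⟨N, fun k hk => ?_⟩
    obtain ⟨h1, h2, h3, h4⟩ := hN k hk
    rw [Real.dist_eq, sub_zero, abs_div, abs_of_pos h4]
    have hstep : |S k - T k| / D k
        ≤ ((1 + C * M^(η+1)) * ((lam*M)^k/(k.factorial:ℝ)) + ε/4 * T k) / D k := by
      simp only [div_eq_mul_inv]
      exact mul_le_mul_of_nonneg_right h1 (inv_nonneg.mpr h4.le)
    have hsplit2 : ((1 + C * M^(η+1)) * ((lam*M)^k/(k.factorial:ℝ)) + ε/4 * T k) / D k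
        = (1 + C * M^(η+1)) * (((lam*M)^k/(k.factorial:ℝ))/D k) + ε/4 * (T k / D k) := by
      rw [add_div, mul_div_assoc, mul_div_assoc]
    rw [Real.dist_eq, sub_zero] at h2
    have hb1 : (1 + C * M^(η+1)) * (((lam*M)^k/(k.factorial:ℝ))/D k) < ε/4 :=
      lt_of_le_of_lt (le_abs_self _) h2
    have hb2 : ε/4 * (T k / D k) < ε/4 * 2 := by
      refine mul_lt_mul_of_pos_left h3 hε4
    calc |S k - T k| / D k
        ≤ (1 + C * M^(η+1)) * (((lam*M)^k/(k.factorial:ℝ))/D k) + ε/4 * (T k / D k) :=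
          hstep.trans_eq hsplit2
      _ < ε/4 + ε/4 * 2 := add_lt_add hb1 hb2
      _ ≤ ε := by linarith
  -- conclude
  have main : Tendsto (fun k => S k / D k) atTop (𝓝 1) := by
    have hsum := hST.add hTD
    rw [zero_add] at hsum
    refine hsum.congr (fun k => ?_)
    rw [← add_div, sub_add_cancel]
  exact main
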